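/- Assume chi in (0,1) and eta > 0. For tol in (0,1) define L(tol) by L(tol)+1 = (1/c2)*(log(1/tol) + c1 + log(1 + 2*eta/(1-chi))), where c1 = log(V_0^{eta/chi} * Q_S^{-eta/chi} * Q_W) and c2 = 2*eta*log(chi)/(chi-1). Then W(L(tol),tol) * tol^{2*(1 + (1-chi)/(2*eta))} tends, as tol -> 0+, to the constant C1 = C_alpha^2 * Q_S * Q_W^{(1-chi)/eta} * chi^{-2*chi/(1-chi)} * (1/(2*eta))^2 * (1 + 2*eta/(1-chi))^{2*(1 + (1-chi)/(2*eta))}. -/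

import Mathlib

open Filter

/-- Corollary 2.2 (χ < 1): with `L(tol)` chosen as the upper bound of (2.21),
`W(L(tol),tol) * tol^{2(1+(1-χ)/(2η))} → C₁` as `tol → 0⁺`. -/
theorem mlmc_asymptotic_work_chi_lt_one
    (χ eta Q_W Q_S V0 C_alpha : ℝ)
    (hχpos : 0 < χ) (hχ1 : χ < 1) (heta : 0 < eta)
    (hQW : 0 < Q_W) (hQS : 0 < Q_S) (hV0 : 0 < V0) (hCα : 0 < C_alpha)
    (W : ℝ → ℝ → ℝ)
    (hW : ∀ L tol : ℝ, W L tol =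
      tol ^ (-(2 + (1 / eta) * (1 - χ) / (1 - χ ^ (L + 1))))
        * (C_alpha ^ 2 * V0 * (Q_S / V0) ^ ((1 - χ ^ L) / (1 - χ ^ (L + 1)))
            * Q_W ^ ((1 / eta) * (1 - χ) / (1 - χ ^ (L + 1)))
            * χ ^ (-(2 * χ / (1 - χ)) * (1 - χ ^ L) / (1 - χ ^ (L + 1))
                + 2 * L * χ ^ (L + 1) / (1 - χ ^ (L + 1))))
        * ((1 / (2 * eta)) ^ 2
            * (1 + 2 * eta * (1 - χ ^ (L + 1)) / (1 - χ))
                ^ (2 * (1 + (1 / (2 * eta)) * (1 - χ) / (1 - χ ^ (L + 1))))))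
    (c1 c2 : ℝ)
    (hc1 : c1 = Real.log (V0 ^ (eta / χ) * Q_S ^ (-(eta / χ)) * Q_W))
    (hc2 : c2 = 2 * eta * Real.log χ / (χ - 1))
    (Lf : ℝ → ℝ)
    (hLf : ∀ tol : ℝ, Lf tol + 1 =
      (1 / c2) * (Real.log (1 / tol) + c1 + Real.log (1 + 2 * eta / (1 - χ)))) :
    Tendsto
      (fun tol => W (Lf tol) tol * tol ^ (2 * (1 + (1 - χ) / (2 * eta))))
      (nhdsWithin 0 (Set.Ioi 0))
      (nhds (C_alpha ^ 2 * Q_S * Q_W ^ ((1 - χ) / eta)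
        * χ ^ (-(2 * χ) / (1 - χ)) * (1 / (2 * eta)) ^ 2
        * (1 + 2 * eta / (1 - χ)) ^ (2 * (1 + (1 - χ) / (2 * eta))))) := by
  have hχ1' : (0:ℝ) < 1 - χ := by linarith
  have hlogχ : Real.log χ < 0 := Real.log_neg hχpos hχ1
  have hc2pos : 0 < c2 := by
    rw [hc2]
    exact div_pos_of_neg_of_neg
      (mul_neg_of_pos_of_neg (by positivity) hlogχ) (by linarith)
  have hc2ne : c2 ≠ 0 := hc2pos.ne'
  set l := nhdsWithin (0:ℝ) (Set.Ioi 0) with hl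
  set C : ℝ := c1 + Real.log (1 + 2 * eta / (1 - χ)) with hC
  -- reformulate L
  have hL1 : ∀ tol : ℝ, Lf tol + 1 = (-Real.log tol + C) / c2 := by
    intro tol
    rw [hLf tol, show (1:ℝ)/tol = tol⁻¹ from one_div tol, Real.log_inv]
    rw [hC]
    ring
  -- u := -log tol tends to atTop
  have hu : Tendsto (fun tol : ℝ => -Real.log tol) l atTop :=
    tendsto_neg_atBot_atTop.comp Real.tendsto_log_nhdsGT_zero
  -- L + 1 tends to atTop
  have hx : Tendsto (fun tol => Lf tol + 1) l atTop := by
    simp only [hL1]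
    exact (tendsto_atTop_add_const_right _ C hu).atTop_div_const hc2pos
  have hx' : Tendsto Lf l atTop := by
    have := tendsto_atTop_add_const_right _ (-1 : ℝ) hx
    simpa using this
  -- s := χ^(L+1) → 0
  have hs : Tendsto (fun tol => χ ^ (Lf tol + 1)) l (nhds 0) :=
    (tendsto_rpow_atTop_of_base_lt_one χ (by linarith) hχ1).comp hx
  have ht : Tendsto (fun tol => χ ^ (Lf tol)) l (nhds 0) :=
    (tendsto_rpow_atTop_of_base_lt_one χ (by linarith) hχ1).comp hx'
  -- key : x * χ^((x+C)/c2) → 0 at atTop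
  set a : ℝ := -Real.log χ / c2 with ha'
  have ha : 0 < a := div_pos (by linarith) hc2pos
  have key : Tendsto (fun x : ℝ => x * χ ^ ((x + C) / c2)) atTop (nhds 0) := by
    have h1 : Tendsto (fun y : ℝ => (1 / a) * (y * Real.exp (-y)) * Real.exp (-(a * C)))
        atTop (nhds 0) := by
      have := (Real.tendsto_pow_mul_exp_neg_atTop_nhds_zero 1).const_mul (1 / a)
      have h2 := this.mul_const (Real.exp (-(a * C)))
      simpa using h2
    have h3 : Tendsto (fun x : ℝ => a * x) atTop atTop :=
      tendsto_atTop_atTop_of_monotone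
        (fun x y hxy => by nlinarith) (fun b => ⟨b / a + 1, by nlinarith [div_mul_cancel₀ b ha.ne']⟩)
    have := h1.comp h3
    refine this.congr fun x => ?_
    simp only [Function.comp]
    rw [Real.rpow_def_of_pos hχpos]
    have hax : Real.log χ * ((x + C) / c2) = -(a * x) + -(a * C) := by
      rw [ha']; field_simp
    rw [hax, Real.exp_add]
    field_simp
  -- p := (-log tol) * χ^(L+1) → 0
  have hp : Tendsto (fun tol => (-Real.log tol) * χ ^ (Lf tol + 1)) l (nhds 0) := by
    have := key.comp hu
    refine this.congr fun tol => ?_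
    simp only [Function.comp]
    rw [← hL1 tol]
  -- q := L * χ^(L+1) → 0
  have hq : Tendsto (fun tol => Lf tol * χ ^ (Lf tol + 1)) l (nhds 0) := by
    have h := (hp.const_mul (1 / c2)).add (hs.const_mul (C / c2 - 1))
    rw [show (1 / c2) * 0 + (C / c2 - 1) * 0 = 0 by ring] at h
    refine h.congr fun tol => ?_
    have hLt : Lf tol = (-Real.log tol + C) / c2 - 1 := by
      have := hL1 tol; linarith
    rw [hLt]; field_simp; ring
  -- auxiliary limits
  have hs1' : Tendsto (fun tol => 1 - χ ^ (Lf tol + 1)) l (nhds 1) := by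
    have := tendsto_const_nhds (x := (1:ℝ)) (f := l) |>.sub hs
    simpa using this
  have ht1 : Tendsto (fun tol => 1 - χ ^ (Lf tol)) l (nhds 1) := by
    have := tendsto_const_nhds (x := (1:ℝ)) (f := l) |>.sub ht
    simpa using this
  have hE1 : Tendsto (fun tol => (1 - χ ^ (Lf tol)) / (1 - χ ^ (Lf tol + 1))) l (nhds 1) := by
    have := ht1.div hs1' one_ne_zero
    simpa [Pi.div_def] using this
  have hE2 : Tendsto (fun tol => (1 / eta) * (1 - χ) / (1 - χ ^ (Lf tol + 1))) l
      (nhds ((1 - χ) / eta)) := by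
    have := (tendsto_const_nhds (x := (1 / eta) * (1 - χ)) (f := l)).div hs1' one_ne_zero
    rw [show ((1 / eta) * (1 - χ)) / 1 = (1 - χ) / eta by field_simp] at this
    exact this
  have hE3 : Tendsto (fun tol => -(2 * χ / (1 - χ)) * (1 - χ ^ (Lf tol)) / (1 - χ ^ (Lf tol + 1))
      + 2 * Lf tol * χ ^ (Lf tol + 1) / (1 - χ ^ (Lf tol + 1))) l
      (nhds (-(2 * χ) / (1 - χ))) := by
    have h1 : Tendsto (fun tol => -(2 * χ / (1 - χ)) * (1 - χ ^ (Lf tol)) / (1 - χ ^ (Lf tol + 1)))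
        l (nhds (-(2 * χ) / (1 - χ))) := by
      have := (ht1.const_mul (-(2 * χ / (1 - χ)))).div hs1' one_ne_zero
      rw [show (-(2 * χ / (1 - χ)) * 1) / 1 = -(2 * χ) / (1 - χ) by ring] at this
      exact this
    have h2 : Tendsto (fun tol => 2 * Lf tol * χ ^ (Lf tol + 1) / (1 - χ ^ (Lf tol + 1)))
        l (nhds 0) := by
      have := (hq.const_mul 2).div hs1' one_ne_zero
      rw [show (2 * (0:ℝ)) / 1 = 0 by ring] at this
      refine this.congr fun tol => ?_
      simp only [Pi.div_apply]
      ring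
    have := h1.add h2
    simpa using this
  -- the exponential factor
  have hA : Tendsto (fun tol =>
      Real.exp ((1 - χ) / eta * ((-Real.log tol) * χ ^ (Lf tol + 1)) / (1 - χ ^ (Lf tol + 1))))
      l (nhds 1) := by
    have harg : Tendsto (fun tol =>
        (1 - χ) / eta * ((-Real.log tol) * χ ^ (Lf tol + 1)) / (1 - χ ^ (Lf tol + 1)))
        l (nhds 0) := by
      have := (hp.const_mul ((1 - χ) / eta)).div hs1' one_ne_zero
      simpa [Pi.div_def] using this
    have := (Real.continuous_exp.tendsto 0).comp harg
    simpa [Function.comp_def] using this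
  -- the middle factor
  have hB1 : Tendsto (fun tol => (Q_S / V0) ^ ((1 - χ ^ (Lf tol)) / (1 - χ ^ (Lf tol + 1))))
      l (nhds (Q_S / V0)) := by
    have := (tendsto_const_nhds (x := Q_S / V0) (f := l)).rpow hE1
      (Or.inl (div_pos hQS hV0).ne')
    simpa using this
  have hB2 : Tendsto (fun tol => Q_W ^ ((1 / eta) * (1 - χ) / (1 - χ ^ (Lf tol + 1))))
      l (nhds (Q_W ^ ((1 - χ) / eta))) :=
    (tendsto_const_nhds (x := Q_W) (f := l)).rpow hE2 (Or.inl hQW.ne')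
  have hB3 : Tendsto (fun tol =>
      χ ^ (-(2 * χ / (1 - χ)) * (1 - χ ^ (Lf tol)) / (1 - χ ^ (Lf tol + 1))
        + 2 * Lf tol * χ ^ (Lf tol + 1) / (1 - χ ^ (Lf tol + 1))))
      l (nhds (χ ^ (-(2 * χ) / (1 - χ)))) :=
    (tendsto_const_nhds (x := χ) (f := l)).rpow hE3 (Or.inl hχpos.ne')
  have hM : Tendsto (fun tol =>
      C_alpha ^ 2 * V0 * (Q_S / V0) ^ ((1 - χ ^ (Lf tol)) / (1 - χ ^ (Lf tol + 1)))
        * Q_W ^ ((1 / eta) * (1 - χ) / (1 - χ ^ (Lf tol + 1)))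
        * χ ^ (-(2 * χ / (1 - χ)) * (1 - χ ^ (Lf tol)) / (1 - χ ^ (Lf tol + 1))
            + 2 * Lf tol * χ ^ (Lf tol + 1) / (1 - χ ^ (Lf tol + 1))))
      l (nhds (C_alpha ^ 2 * V0 * (Q_S / V0) * Q_W ^ ((1 - χ) / eta)
        * χ ^ (-(2 * χ) / (1 - χ)))) :=
    (((tendsto_const_nhds (x := C_alpha ^ 2 * V0) (f := l)).mul hB1).mul hB2).mul hB3
  -- the last factor
  have hbase : Tendsto (fun tol => 1 + 2 * eta * (1 - χ ^ (Lf tol + 1)) / (1 - χ)) l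
      (nhds (1 + 2 * eta / (1 - χ))) := by
    have := (tendsto_const_nhds (x := (1:ℝ)) (f := l)).add
      ((hs1'.const_mul (2 * eta)).div_const (1 - χ))
    rw [show (1:ℝ) + (2 * eta * 1) / (1 - χ) = 1 + 2 * eta / (1 - χ) by ring] at this
    exact this
  have hbpos : (0:ℝ) < 1 + 2 * eta / (1 - χ) := by positivity
  have hexp3 : Tendsto (fun tol => 2 * (1 + (1 / (2 * eta)) * (1 - χ) / (1 - χ ^ (Lf tol + 1))))
      l (nhds (2 * (1 + (1 - χ) / (2 * eta)))) := by
    have h := (tendsto_const_nhds (x := (1 / (2 * eta)) * (1 - χ)) (f := l)).div hs1' one_ne_zero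
    have h2 := ((tendsto_const_nhds (x := (1:ℝ)) (f := l)).add h).const_mul 2
    rw [show 2 * ((1:ℝ) + (1 / (2 * eta)) * (1 - χ) / 1) = 2 * (1 + (1 - χ) / (2 * eta)) by
      field_simp] at h2
    exact h2
  have hN : Tendsto (fun tol =>
      (1 / (2 * eta)) ^ 2 * (1 + 2 * eta * (1 - χ ^ (Lf tol + 1)) / (1 - χ))
        ^ (2 * (1 + (1 / (2 * eta)) * (1 - χ) / (1 - χ ^ (Lf tol + 1)))))
      l (nhds ((1 / (2 * eta)) ^ 2
        * (1 + 2 * eta / (1 - χ)) ^ (2 * (1 + (1 - χ) / (2 * eta))))) :=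
    (tendsto_const_nhds (x := (1 / (2 * eta)) ^ 2) (f := l)).mul
      (hbase.rpow hexp3 (Or.inl hbpos.ne'))
  -- combine
  have hG : Tendsto (fun tol =>
      Real.exp ((1 - χ) / eta * ((-Real.log tol) * χ ^ (Lf tol + 1)) / (1 - χ ^ (Lf tol + 1)))
      * (C_alpha ^ 2 * V0 * (Q_S / V0) ^ ((1 - χ ^ (Lf tol)) / (1 - χ ^ (Lf tol + 1)))
          * Q_W ^ ((1 / eta) * (1 - χ) / (1 - χ ^ (Lf tol + 1)))
          * χ ^ (-(2 * χ / (1 - χ)) * (1 - χ ^ (Lf tol)) / (1 - χ ^ (Lf tol + 1))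
              + 2 * Lf tol * χ ^ (Lf tol + 1) / (1 - χ ^ (Lf tol + 1))))
      * ((1 / (2 * eta)) ^ 2 * (1 + 2 * eta * (1 - χ ^ (Lf tol + 1)) / (1 - χ))
          ^ (2 * (1 + (1 / (2 * eta)) * (1 - χ) / (1 - χ ^ (Lf tol + 1))))))
      l (nhds (C_alpha ^ 2 * Q_S * Q_W ^ ((1 - χ) / eta)
        * χ ^ (-(2 * χ) / (1 - χ)) * (1 / (2 * eta)) ^ 2
        * (1 + 2 * eta / (1 - χ)) ^ (2 * (1 + (1 - χ) / (2 * eta))))) := by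
    have h := (hA.mul hM).mul hN
    have heq : 1 * (C_alpha ^ 2 * V0 * (Q_S / V0) * Q_W ^ ((1 - χ) / eta)
        * χ ^ (-(2 * χ) / (1 - χ)))
        * ((1 / (2 * eta)) ^ 2 * (1 + 2 * eta / (1 - χ)) ^ (2 * (1 + (1 - χ) / (2 * eta))))
        = C_alpha ^ 2 * Q_S * Q_W ^ ((1 - χ) / eta)
        * χ ^ (-(2 * χ) / (1 - χ)) * (1 / (2 * eta)) ^ 2
        * (1 + 2 * eta / (1 - χ)) ^ (2 * (1 + (1 - χ) / (2 * eta))) := by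
      rw [one_mul, show C_alpha ^ 2 * V0 * (Q_S / V0) = C_alpha ^ 2 * Q_S by
        field_simp]
      ring
    rw [heq] at h
    exact h
  -- eventual equality
  have hslt : ∀ᶠ tol in l, χ ^ (Lf tol + 1) < 1 := hs.eventually_lt_const (by norm_num)
  refine Tendsto.congr' ?_ hG
  filter_upwards [hslt, self_mem_nhdsWithin] with tol hs1 htol
  simp only [Set.mem_Ioi] at htol
  rw [hW]
  have hSpos : 0 < χ ^ (Lf tol + 1) := Real.rpow_pos_of_pos hχpos _
  have h1S : (1:ℝ) - χ ^ (Lf tol + 1) ≠ 0 := by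
    have : (0:ℝ) < 1 - χ ^ (Lf tol + 1) := by linarith
    exact this.ne'
  rw [mul_right_comm _ _ (tol ^ (2 * (1 + (1 - χ) / (2 * eta)))),
      mul_right_comm (tol ^ (-(2 + (1 / eta) * (1 - χ) / (1 - χ ^ (Lf tol + 1))))) _
        (tol ^ (2 * (1 + (1 - χ) / (2 * eta))))]
  congr 2
  rw [← Real.rpow_add htol, Real.rpow_def_of_pos htol]
  congr 1
  field_simp
  ring
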